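/- Let F and G be persistence modules indexed by (ℝ, ≤) with values in vector spaces, and let I_ε denote restriction to the subposet εℤ. Then d_I(F,G) − 2ε ≤ d_I(I_ε(F), I_ε(G)) ≤ d_I(F,G) + ε, where d_I denotes interleaving distance. -/

import Mathlib

/-- A persistence module indexed by `(ℝ, ≤)` with values in `k`-vector spaces. -/
structure RPersMod (k : Type*) [Field k] where
  V : ℝ → Type*
  [grp : ∀ x, AddCommGroup (V x)]
  [mod : ∀ x, Module k (V x)]
  map : ∀ {x y : ℝ}, x ≤ y → (V x →ₗ[k] V y)
  map_id : ∀ x : ℝ, map (le_refl x) = LinearMap.id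
  map_comp : ∀ {x y z : ℝ} (hxy : x ≤ y) (hyz : y ≤ z),
    (map hyz).comp (map hxy) = map (hxy.trans hyz)

attribute [instance] RPersMod.grp RPersMod.mod

/-- A `δ`-interleaving of real-indexed persistence modules: a pair of natural
transformations shifting by `δ ≥ 0` whose composites are the `2δ` structure maps. -/
structure RItl {k : Type*} [Field k] (F G : RPersMod k) (δ : ℝ) where
  nonneg : 0 ≤ δ
  φ : ∀ x : ℝ, F.V x →ₗ[k] G.V (x + δ)
  ψ : ∀ x : ℝ, G.V x →ₗ[k] F.V (x + δ)
  φ_natural : ∀ {x y : ℝ} (h : x ≤ y),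
    (φ y).comp (F.map h) = (G.map (by linarith : x + δ ≤ y + δ)).comp (φ x)
  ψ_natural : ∀ {x y : ℝ} (h : x ≤ y),
    (ψ y).comp (G.map h) = (F.map (by linarith : x + δ ≤ y + δ)).comp (ψ x)
  comp_φψ : ∀ x : ℝ, (ψ (x + δ)).comp (φ x) = F.map (by linarith : x ≤ x + δ + δ)
  comp_ψφ : ∀ x : ℝ, (φ (x + δ)).comp (ψ x) = G.map (by linarith : x ≤ x + δ + δ)

/-- The interleaving distance between real-indexed persistence modules. -/
noncomputable def rDist {k : Type*} [Field k] (F G : RPersMod k) : ℝ :=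
  sInf {δ : ℝ | Nonempty (RItl F G δ)}

/-- A persistence module indexed by `(ℤ, ≤)` (representing an `εℤ`-indexed module). -/
structure ZPersMod (k : Type*) [Field k] where
  V : ℤ → Type*
  [grp : ∀ n, AddCommGroup (V n)]
  [mod : ∀ n, Module k (V n)]
  map : ∀ {m n : ℤ}, m ≤ n → (V m →ₗ[k] V n)
  map_id : ∀ n : ℤ, map (le_refl n) = LinearMap.id
  map_comp : ∀ {m n p : ℤ} (hmn : m ≤ n) (hnp : n ≤ p),
    (map hnp).comp (map hmn) = map (hmn.trans hnp)

attribute [instance] ZPersMod.grp ZPersMod.mod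

/-- An interleaving of `ℤ`-indexed modules with shift `n` steps (i.e. `nε` for
an `εℤ`-indexed module). -/
structure ZItl {k : Type*} [Field k] (M N : ZPersMod k) (n : ℕ) where
  φ : ∀ j : ℤ, M.V j →ₗ[k] N.V (j + n)
  ψ : ∀ j : ℤ, N.V j →ₗ[k] M.V (j + n)
  φ_natural : ∀ {i j : ℤ} (h : i ≤ j),
    (φ j).comp (M.map h) = (N.map (by omega : (i : ℤ) + (n : ℤ) ≤ j + (n : ℤ))).comp (φ i)
  ψ_natural : ∀ {i j : ℤ} (h : i ≤ j),
    (ψ j).comp (N.map h) = (M.map (by omega : (i : ℤ) + (n : ℤ) ≤ j + (n : ℤ))).comp (ψ i)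
  comp_φψ : ∀ j : ℤ, (ψ (j + n)).comp (φ j)
      = M.map (by omega : (j : ℤ) ≤ j + (n : ℤ) + (n : ℤ))
  comp_ψφ : ∀ j : ℤ, (φ (j + n)).comp (ψ j)
      = N.map (by omega : (j : ℤ) ≤ j + (n : ℤ) + (n : ℤ))

/-- The interleaving distance between `εℤ`-indexed persistence modules, as a
real number: the infimum of the shifts `ε·n` over all interleavings. -/
noncomputable def zDist {k : Type*} [Field k] (ε : ℝ) (M N : ZPersMod k) : ℝ :=
  sInf {δ : ℝ | ∃ n : ℕ, δ = ε * n ∧ Nonempty (ZItl M N n)}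

/-- `I_ε(F)`: the restriction of a real-indexed persistence module to the
subposet `εℤ` (indexed by `ℤ`, with `n` corresponding to `ε·n ∈ εℤ`). -/
def restrictPM {k : Type*} [Field k] (ε : ℝ) (hε : 0 < ε) (F : RPersMod k) :
    ZPersMod k where
  V n := F.V (ε * n)
  map {m n} h := F.map (by
    have : (m : ℝ) ≤ n := by exact_mod_cast h
    nlinarith)
  map_id n := F.map_id _
  map_comp hmn hnp := F.map_comp _ _

section Auxiliary

variable {k : Type*} [Field k]

theorem rmap_map (F : RPersMod k) {x y z : ℝ} (h1 : x ≤ y) (h2 : y ≤ z) (v : F.V x) :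
    F.map h2 (F.map h1 v) = F.map (h1.trans h2) v :=
  LinearMap.congr_fun (F.map_comp h1 h2) v

theorem mulε_le {ε : ℝ} (hε : 0 < ε) {i j : ℤ} (h : i ≤ j) :
    ε * (i : ℝ) ≤ ε * (j : ℝ) := by
  have hij : (i : ℝ) ≤ j := by exact_mod_cast h
  nlinarith

theorem le_ceil_mul {ε : ℝ} (hε : 0 < ε) (x : ℝ) : x ≤ ε * (⌈x / ε⌉ : ℝ) := by
  have h := Int.le_ceil (x / ε)
  rw [div_le_iff₀ hε] at h
  linarith [h]

theorem ceil_mul_le {ε : ℝ} (hε : 0 < ε) (x : ℝ) : ε * (⌈x / ε⌉ : ℝ) ≤ x + ε := by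
  have h := Int.ceil_lt_add_one (x / ε)
  have h2 : ε * (x / ε) = x := by field_simp
  nlinarith

theorem rphi_nat {F G : RPersMod k} {δ : ℝ} (it : RItl F G δ) {x y : ℝ} (h : x ≤ y)
    (v : F.V x) :
    it.φ y (F.map h v) = G.map (by linarith : x + δ ≤ y + δ) (it.φ x v) :=
  LinearMap.congr_fun (it.φ_natural h) v

theorem rpsi_nat {F G : RPersMod k} {δ : ℝ} (it : RItl F G δ) {x y : ℝ} (h : x ≤ y)
    (v : G.V x) :
    it.ψ y (G.map h v) = F.map (by linarith : x + δ ≤ y + δ) (it.ψ x v) :=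
  LinearMap.congr_fun (it.ψ_natural h) v

theorem rcomp_φψ {F G : RPersMod k} {δ : ℝ} (it : RItl F G δ) (x : ℝ) (v : F.V x) :
    it.ψ (x + δ) (it.φ x v)
      = F.map (by nlinarith [it.nonneg] : x ≤ x + δ + δ) v :=
  LinearMap.congr_fun (it.comp_φψ x) v

theorem rcomp_ψφ {F G : RPersMod k} {δ : ℝ} (it : RItl F G δ) (x : ℝ) (v : G.V x) :
    it.φ (x + δ) (it.ψ x v)
      = G.map (by nlinarith [it.nonneg] : x ≤ x + δ + δ) v :=
  LinearMap.congr_fun (it.comp_ψφ x) v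

theorem res_map_apply (ε : ℝ) (hε : 0 < ε) (F : RPersMod k) {i j : ℤ} (h : i ≤ j)
    (v : F.V (ε * (i : ℝ))) :
    (restrictPM ε hε F).map h v = F.map (mulε_le hε h) v := rfl

theorem res_phi_nat {F G : RPersMod k} {ε : ℝ} (hε : 0 < ε) {n : ℕ}
    (it : ZItl (restrictPM ε hε F) (restrictPM ε hε G) n) {i j : ℤ} (h : i ≤ j)
    (v : F.V (ε * (i : ℝ))) :
    it.φ j (F.map (mulε_le hε h) v)
      = G.map (mulε_le hε (by omega : i + (n : ℤ) ≤ j + (n : ℤ))) (it.φ i v) :=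
  LinearMap.congr_fun (it.φ_natural h) v

theorem res_psi_nat {F G : RPersMod k} {ε : ℝ} (hε : 0 < ε) {n : ℕ}
    (it : ZItl (restrictPM ε hε F) (restrictPM ε hε G) n) {i j : ℤ} (h : i ≤ j)
    (v : G.V (ε * (i : ℝ))) :
    it.ψ j (G.map (mulε_le hε h) v)
      = F.map (mulε_le hε (by omega : i + (n : ℤ) ≤ j + (n : ℤ))) (it.ψ i v) :=
  LinearMap.congr_fun (it.ψ_natural h) v

theorem res_comp_φψ {F G : RPersMod k} {ε : ℝ} (hε : 0 < ε) {n : ℕ}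
    (it : ZItl (restrictPM ε hε F) (restrictPM ε hε G) n) (j : ℤ)
    (v : F.V (ε * (j : ℝ))) :
    it.ψ (j + (n : ℤ)) (it.φ j v)
      = F.map (mulε_le hε (by omega : j ≤ j + (n : ℤ) + (n : ℤ))) v :=
  LinearMap.congr_fun (it.comp_φψ j) v

theorem res_comp_ψφ {F G : RPersMod k} {ε : ℝ} (hε : 0 < ε) {n : ℕ}
    (it : ZItl (restrictPM ε hε F) (restrictPM ε hε G) n) (j : ℤ)
    (v : G.V (ε * (j : ℝ))) :
    it.φ (j + (n : ℤ)) (it.ψ j v)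
      = G.map (mulε_le hε (by omega : j ≤ j + (n : ℤ) + (n : ℤ))) v :=
  LinearMap.congr_fun (it.comp_ψφ j) v

/-- The `φ` component of the restricted interleaving. -/
noncomputable def zφ {F G : RPersMod k} {ε : ℝ} (hε : 0 < ε) {δ : ℝ}
    (it : RItl F G δ) {n : ℕ} (hn : δ ≤ ε * n) (j : ℤ) :
    F.V (ε * (j : ℝ)) →ₗ[k] G.V (ε * ((j + (n : ℤ) : ℤ) : ℝ)) :=
  (G.map (show ε * (j : ℝ) + δ ≤ ε * ((j + (n : ℤ) : ℤ) : ℝ) by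
      push_cast; linarith)).comp (it.φ (ε * (j : ℝ)))

/-- The `ψ` component of the restricted interleaving. -/
noncomputable def zψ {F G : RPersMod k} {ε : ℝ} (hε : 0 < ε) {δ : ℝ}
    (it : RItl F G δ) {n : ℕ} (hn : δ ≤ ε * n) (j : ℤ) :
    G.V (ε * (j : ℝ)) →ₗ[k] F.V (ε * ((j + (n : ℤ) : ℤ) : ℝ)) :=
  (F.map (show ε * (j : ℝ) + δ ≤ ε * ((j + (n : ℤ) : ℤ) : ℝ) by
      push_cast; linarith)).comp (it.ψ (ε * (j : ℝ)))

theorem zφ_apply {F G : RPersMod k} {ε : ℝ} (hε : 0 < ε) {δ : ℝ}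
    (it : RItl F G δ) {n : ℕ} (hn : δ ≤ ε * n) (j : ℤ) (v : F.V (ε * (j : ℝ))) :
    zφ hε it hn j v = G.map (show ε * (j : ℝ) + δ ≤ ε * ((j + (n : ℤ) : ℤ) : ℝ) by
      push_cast; linarith) (it.φ (ε * (j : ℝ)) v) := rfl

theorem zψ_apply {F G : RPersMod k} {ε : ℝ} (hε : 0 < ε) {δ : ℝ}
    (it : RItl F G δ) {n : ℕ} (hn : δ ≤ ε * n) (j : ℤ) (v : G.V (ε * (j : ℝ))) :
    zψ hε it hn j v = F.map (show ε * (j : ℝ) + δ ≤ ε * ((j + (n : ℤ) : ℤ) : ℝ) by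
      push_cast; linarith) (it.ψ (ε * (j : ℝ)) v) := rfl

theorem zφ_nat {F G : RPersMod k} {ε : ℝ} (hε : 0 < ε) {δ : ℝ}
    (it : RItl F G δ) {n : ℕ} (hn : δ ≤ ε * n) {i j : ℤ} (h : i ≤ j) :
    (zφ hε it hn j).comp (F.map (mulε_le hε h))
      = (G.map (mulε_le hε (show i + (n : ℤ) ≤ j + (n : ℤ) by omega))).comp
          (zφ hε it hn i) := by
  ext v
  simp only [LinearMap.comp_apply, zφ_apply]
  rw [rphi_nat it (mulε_le hε h), rmap_map, rmap_map]

theorem zψ_nat {F G : RPersMod k} {ε : ℝ} (hε : 0 < ε) {δ : ℝ}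
    (it : RItl F G δ) {n : ℕ} (hn : δ ≤ ε * n) {i j : ℤ} (h : i ≤ j) :
    (zψ hε it hn j).comp (G.map (mulε_le hε h))
      = (F.map (mulε_le hε (show i + (n : ℤ) ≤ j + (n : ℤ) by omega))).comp
          (zψ hε it hn i) := by
  ext v
  simp only [LinearMap.comp_apply, zψ_apply]
  rw [rpsi_nat it (mulε_le hε h), rmap_map, rmap_map]

theorem z_comp_φψ {F G : RPersMod k} {ε : ℝ} (hε : 0 < ε) {δ : ℝ}
    (it : RItl F G δ) {n : ℕ} (hn : δ ≤ ε * n) (j : ℤ) :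
    (zψ hε it hn (j + (n : ℤ))).comp (zφ hε it hn j)
      = F.map (mulε_le hε (show j ≤ j + (n : ℤ) + (n : ℤ) by omega)) := by
  ext v
  simp only [LinearMap.comp_apply, zφ_apply, zψ_apply]
  rw [rpsi_nat it (show ε * (j : ℝ) + δ ≤ ε * ((j + (n : ℤ) : ℤ) : ℝ) by
      push_cast; linarith), rcomp_φψ it, rmap_map, rmap_map]

theorem z_comp_ψφ {F G : RPersMod k} {ε : ℝ} (hε : 0 < ε) {δ : ℝ}
    (it : RItl F G δ) {n : ℕ} (hn : δ ≤ ε * n) (j : ℤ) :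
    (zφ hε it hn (j + (n : ℤ))).comp (zψ hε it hn j)
      = G.map (mulε_le hε (show j ≤ j + (n : ℤ) + (n : ℤ) by omega)) := by
  ext v
  simp only [LinearMap.comp_apply, zφ_apply, zψ_apply]
  rw [rphi_nat it (show ε * (j : ℝ) + δ ≤ ε * ((j + (n : ℤ) : ℤ) : ℝ) by
      push_cast; linarith), rcomp_ψφ it, rmap_map, rmap_map]

/-- From an `RItl` at shift `δ ≤ ε·n`, build a `ZItl` at `n` on the restrictions. -/
noncomputable def toZItl {F G : RPersMod k} {ε : ℝ} (hε : 0 < ε) {δ : ℝ}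
    (it : RItl F G δ) {n : ℕ} (hn : δ ≤ ε * n) :
    ZItl (restrictPM ε hε F) (restrictPM ε hε G) n where
  φ j := zφ hε it hn j
  ψ j := zψ hε it hn j
  φ_natural {i j} h := zφ_nat hε it hn h
  ψ_natural {i j} h := zψ_nat hε it hn h
  comp_φψ j := z_comp_φψ hε it hn j
  comp_ψφ j := z_comp_ψφ hε it hn j

/-- The `φ` component of the extended interleaving. -/
noncomputable def rφ {F G : RPersMod k} {ε : ℝ} (hε : 0 < ε) {n : ℕ}
    (it : ZItl (restrictPM ε hε F) (restrictPM ε hε G) n) (x : ℝ) :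
    F.V x →ₗ[k] G.V (x + ε * ((n : ℝ) + 1)) :=
  (G.map (show ε * ((⌈x / ε⌉ + (n : ℤ) : ℤ) : ℝ) ≤ x + ε * ((n : ℝ) + 1) by
      have h := ceil_mul_le hε x
      push_cast; nlinarith)).comp
    ((it.φ ⌈x / ε⌉).comp (F.map (le_ceil_mul hε x)))

/-- The `ψ` component of the extended interleaving. -/
noncomputable def rψ {F G : RPersMod k} {ε : ℝ} (hε : 0 < ε) {n : ℕ}
    (it : ZItl (restrictPM ε hε F) (restrictPM ε hε G) n) (x : ℝ) :
    G.V x →ₗ[k] F.V (x + ε * ((n : ℝ) + 1)) :=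
  (F.map (show ε * ((⌈x / ε⌉ + (n : ℤ) : ℤ) : ℝ) ≤ x + ε * ((n : ℝ) + 1) by
      have h := ceil_mul_le hε x
      push_cast; nlinarith)).comp
    ((it.ψ ⌈x / ε⌉).comp (G.map (le_ceil_mul hε x)))

theorem rφ_apply {F G : RPersMod k} {ε : ℝ} (hε : 0 < ε) {n : ℕ}
    (it : ZItl (restrictPM ε hε F) (restrictPM ε hε G) n) (x : ℝ) (v : F.V x) :
    rφ hε it x v
      = G.map (show ε * ((⌈x / ε⌉ + (n : ℤ) : ℤ) : ℝ) ≤ x + ε * ((n : ℝ) + 1) by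
          have h := ceil_mul_le hε x
          push_cast; nlinarith)
        (it.φ ⌈x / ε⌉ (F.map (le_ceil_mul hε x) v)) := rfl

theorem rψ_apply {F G : RPersMod k} {ε : ℝ} (hε : 0 < ε) {n : ℕ}
    (it : ZItl (restrictPM ε hε F) (restrictPM ε hε G) n) (x : ℝ) (v : G.V x) :
    rψ hε it x v
      = F.map (show ε * ((⌈x / ε⌉ + (n : ℤ) : ℤ) : ℝ) ≤ x + ε * ((n : ℝ) + 1) by
          have h := ceil_mul_le hε x
          push_cast; nlinarith)
        (it.ψ ⌈x / ε⌉ (G.map (le_ceil_mul hε x) v)) := rfl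

theorem rφ_nat {F G : RPersMod k} {ε : ℝ} (hε : 0 < ε) {n : ℕ}
    (it : ZItl (restrictPM ε hε F) (restrictPM ε hε G) n) {x y : ℝ} (h : x ≤ y) :
    (rφ hε it y).comp (F.map h)
      = (G.map (by linarith : x + ε * ((n : ℝ) + 1) ≤ y + ε * ((n : ℝ) + 1))).comp (rφ hε it x) := by
  have hc : ⌈x / ε⌉ ≤ ⌈y / ε⌉ := Int.ceil_le_ceil (by gcongr)
  ext v
  simp only [LinearMap.comp_apply, rφ_apply]
  have e1 : F.map (le_ceil_mul hε y) (F.map h v)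
      = F.map (mulε_le hε hc) (F.map (le_ceil_mul hε x) v) := by
    rw [rmap_map, rmap_map]
  erw [e1, res_phi_nat hε it hc, rmap_map, rmap_map]

theorem rψ_nat {F G : RPersMod k} {ε : ℝ} (hε : 0 < ε) {n : ℕ}
    (it : ZItl (restrictPM ε hε F) (restrictPM ε hε G) n) {x y : ℝ} (h : x ≤ y) :
    (rψ hε it y).comp (G.map h)
      = (F.map (by linarith : x + ε * ((n : ℝ) + 1) ≤ y + ε * ((n : ℝ) + 1))).comp (rψ hε it x) := by
  have hc : ⌈x / ε⌉ ≤ ⌈y / ε⌉ := Int.ceil_le_ceil (by gcongr)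
  ext v
  simp only [LinearMap.comp_apply, rψ_apply]
  have e1 : G.map (le_ceil_mul hε y) (G.map h v)
      = G.map (mulε_le hε hc) (G.map (le_ceil_mul hε x) v) := by
    rw [rmap_map, rmap_map]
  erw [e1, res_psi_nat hε it hc, rmap_map, rmap_map]

theorem r_ceil_le {ε : ℝ} (hε : 0 < ε) (n : ℕ) (x : ℝ) :
    ⌈x / ε⌉ + (n : ℤ) ≤ ⌈(x + ε * ((n : ℝ) + 1)) / ε⌉ := by
  have h1 : ε * ((⌈x / ε⌉ + (n : ℤ) : ℤ) : ℝ)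
      ≤ ε * ((⌈(x + ε * ((n : ℝ) + 1)) / ε⌉ : ℤ) : ℝ) := by
    have h2 := ceil_mul_le hε x
    have h3 := le_ceil_mul hε (x + ε * ((n : ℝ) + 1))
    push_cast; nlinarith
  have h4 := le_of_mul_le_mul_left h1 hε
  exact_mod_cast h4

theorem r_comp_φψ {F G : RPersMod k} {ε : ℝ} (hε : 0 < ε) {n : ℕ}
    (it : ZItl (restrictPM ε hε F) (restrictPM ε hε G) n) (x : ℝ) :
    (rψ hε it (x + ε * ((n : ℝ) + 1))).comp (rφ hε it x)
      = F.map (show x ≤ x + ε * ((n : ℝ) + 1) + ε * ((n : ℝ) + 1) by nlinarith) := by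
  have hc := r_ceil_le hε n x
  ext v
  simp only [LinearMap.comp_apply, rφ_apply, rψ_apply]
  erw [rmap_map, res_psi_nat hε it hc, res_comp_φψ hε it, rmap_map, rmap_map, rmap_map]

theorem r_comp_ψφ {F G : RPersMod k} {ε : ℝ} (hε : 0 < ε) {n : ℕ}
    (it : ZItl (restrictPM ε hε F) (restrictPM ε hε G) n) (x : ℝ) :
    (rφ hε it (x + ε * ((n : ℝ) + 1))).comp (rψ hε it x)
      = G.map (show x ≤ x + ε * ((n : ℝ) + 1) + ε * ((n : ℝ) + 1) by nlinarith) := by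
  have hc := r_ceil_le hε n x
  ext v
  simp only [LinearMap.comp_apply, rφ_apply, rψ_apply]
  erw [rmap_map, res_phi_nat hε it hc, res_comp_ψφ hε it, rmap_map, rmap_map, rmap_map]

/-- From a `ZItl` at `n` on the restrictions, build an `RItl` at `ε·(n+1)`. -/
noncomputable def toRItl {F G : RPersMod k} {ε : ℝ} (hε : 0 < ε) {n : ℕ}
    (it : ZItl (restrictPM ε hε F) (restrictPM ε hε G) n) :
    RItl F G (ε * ((n : ℝ) + 1)) where
  nonneg := by positivity
  φ x := rφ hε it x
  ψ x := rψ hε it x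
  φ_natural {x y} h := rφ_nat hε it h
  ψ_natural {x y} h := rψ_nat hε it h
  comp_φψ x := r_comp_φψ hε it x
  comp_ψφ x := r_comp_ψφ hε it x

end Auxiliary

/-- Restriction to `εℤ` changes the interleaving distance by at most `2ε`
from below and `ε` from above. -/
theorem restriction_distance_bounds {k : Type*} [Field k] (F G : RPersMod k)
    (ε : ℝ) (hε : 0 < ε) :
    rDist F G - 2 * ε ≤ zDist ε (restrictPM ε hε F) (restrictPM ε hε G) ∧
      zDist ε (restrictPM ε hε F) (restrictPM ε hε G) ≤ rDist F G + ε := by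
  classical
  unfold rDist zDist
  set S : Set ℝ := {δ : ℝ | Nonempty (RItl F G δ)} with hSdef
  set Z : Set ℝ := {δ : ℝ | ∃ n : ℕ, δ = ε * n ∧
      Nonempty (ZItl (restrictPM ε hε F) (restrictPM ε hε G) n)} with hZdef
  have hSbd : BddBelow S := ⟨0, fun δ hδ => hδ.some.nonneg⟩
  have hZbd : BddBelow Z := ⟨0, by rintro δ ⟨n, rfl, -⟩; positivity⟩
  have hSZ : ∀ δ ∈ S, ∃ n : ℕ, ε * (n : ℝ) ∈ Z ∧ ε * (n : ℝ) ≤ δ + ε := by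
    rintro δ ⟨it⟩
    have hδ0 : 0 ≤ δ := it.nonneg
    have h0 : ((⌈δ / ε⌉.toNat : ℕ) : ℤ) = ⌈δ / ε⌉ :=
      Int.toNat_of_nonneg (Int.ceil_nonneg (by positivity : (0:ℝ) ≤ δ / ε))
    have hcast : ((⌈δ / ε⌉.toNat : ℕ) : ℝ) = ((⌈δ / ε⌉ : ℤ) : ℝ) := by
      exact_mod_cast h0
    have hn : δ ≤ ε * ((⌈δ / ε⌉.toNat : ℕ) : ℝ) := by
      rw [hcast]; exact le_ceil_mul hε δ
    refine ⟨⌈δ / ε⌉.toNat, ⟨⌈δ / ε⌉.toNat, rfl, ⟨toZItl hε it hn⟩⟩, ?_⟩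
    rw [hcast]; linarith [ceil_mul_le hε δ]
  constructor
  · by_cases hZne : Z.Nonempty
    · refine le_csInf hZne ?_
      rintro z ⟨n, rfl, ⟨zit⟩⟩
      have h1 : sInf S ≤ ε * ((n : ℝ) + 1) := csInf_le hSbd ⟨toRItl hε zit⟩
      nlinarith
    · have hSe : S = ∅ := by
        by_contra h
        obtain ⟨δ, hδ⟩ := Set.nonempty_iff_ne_empty.2 h
        obtain ⟨n, hmem, -⟩ := hSZ δ hδ
        exact hZne ⟨_, hmem⟩
      have hZe : Z = ∅ := Set.not_nonempty_iff_eq_empty.1 hZne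
      rw [hSe, hZe, Real.sInf_empty]
      linarith
  · by_cases hSne : S.Nonempty
    · have key : ∀ δ ∈ S, sInf Z - ε ≤ δ := by
        intro δ hδ
        obtain ⟨n, hmem, hle⟩ := hSZ δ hδ
        have := csInf_le hZbd hmem
        linarith
      have := le_csInf hSne key
      linarith
    · have hSe : S = ∅ := Set.not_nonempty_iff_eq_empty.1 hSne
      have hZe : Z = ∅ := by
        by_contra h
        obtain ⟨z, hz⟩ := Set.nonempty_iff_ne_empty.2 h
        obtain ⟨n, rfl, ⟨zit⟩⟩ := hz
        exact hSne ⟨_, ⟨toRItl hε zit⟩⟩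
      rw [hSe, hZe, Real.sInf_empty]
      linarith
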